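/- arXiv:2406.01093 — 2 statements merged into one kernel-verified Lean document; each statement's English description precedes it below -/
import Mathlib

section
/- Let A be a bialgebra over a commutative ring R and let k ≥ 1. Then P^k ⊆ ker(Δ̄^k): the k-fold iterated reduced comultiplication Δ̄^k vanishes on every product of at most k primitive elements of A. -/
open scoped TensorProduct

universe u v

/-- The iterated tensor power carrier: `Tpow R A k` is `A^{⊗(k+1)}`, nested on the left,
so that `Tpow R A 0 = A` and `Tpow R A (k+1) = Tpow R A k ⊗[R] A`. -/
noncomputable def Tpow (R : Type u) [CommRing R] (A : Type v) [AddCommGroup A] [Module R A] :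
    ℕ → ModuleCat.{v} R
  | 0 => ModuleCat.of R A
  | n + 1 => ModuleCat.of R ((Tpow R A n) ⊗[R] A)

/-- The reduced comultiplication `Δ̄ = Δ - (· ⊗ 1) - (1 ⊗ ·)` as an `R`-linear map. -/
noncomputable def reducedComulHom (R : Type u) (A : Type v)
    [CommRing R] [Ring A] [Bialgebra R A] : A →ₗ[R] A ⊗[R] A :=
  Coalgebra.comul - ((TensorProduct.mk R A A).flip 1) - (TensorProduct.mk R A A 1)

/-- The iterated reduced comultiplication `Δ̄^k : A → A^{⊗(k+1)}`, with `Δ̄^0 = id`,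
`Δ̄^1 = Δ̄` and `Δ̄^k = (Δ̄^{k-1} ⊗ id) ∘ Δ̄`. -/
noncomputable def iterRedComul (R : Type u) (A : Type v) [CommRing R] [Ring A] [Bialgebra R A] :
    (k : ℕ) → A →ₗ[R] Tpow R A k
  | 0 => LinearMap.id
  | k + 1 =>
      (TensorProduct.map (iterRedComul R A k) (LinearMap.id (R := R) (M := A))).comp
        (reducedComulHom R A)

/-- An element of a bialgebra is primitive if `Δ(x) = x ⊗ 1 + 1 ⊗ x`. -/
def IsPrimitiveElem (R : Type u) {A : Type v} [CommRing R] [Ring A] [Bialgebra R A]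
    (x : A) : Prop :=
  Coalgebra.comul (R := R) x = x ⊗ₜ[R] (1 : A) + (1 : A) ⊗ₜ[R] x

/-- `Pfilt R A k` is the `R`-submodule of `A` spanned by all products `x₁ ⋯ x_j` of
`1 ≤ j ≤ k` primitive elements: the `k`-th step of the primitive filtration. -/
def Pfilt (R : Type u) (A : Type v) [CommRing R] [Ring A] [Bialgebra R A] (k : ℕ) :
    Submodule R A :=
  Submodule.span R
    {z : A | ∃ l : List A, l ≠ [] ∧ l.length ≤ k ∧ (∀ x ∈ l, IsPrimitiveElem R x) ∧ z = l.prod}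

section Aux

variable (R : Type u) (A : Type v) [CommRing R] [Ring A] [Bialgebra R A]

/-- Generators: tensors of products of nonempty lists of primitives with total length ≤ n. -/
def Sset (n : ℕ) : Set (A ⊗[R] A) :=
  {t | ∃ l₁ l₂ : List A, l₁ ≠ [] ∧ l₂ ≠ [] ∧ (∀ x ∈ l₁, IsPrimitiveElem R x) ∧
    (∀ x ∈ l₂, IsPrimitiveElem R x) ∧ l₁.length + l₂.length ≤ n ∧
    t = l₁.prod ⊗ₜ[R] l₂.prod}

variable {R A}

lemma Sset_mono {n m : ℕ} (h : n ≤ m) : Sset R A n ⊆ Sset R A m := by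
  rintro t ⟨l₁, l₂, h1, h2, h3, h4, h5, h6⟩
  exact ⟨l₁, l₂, h1, h2, h3, h4, h5.trans h, h6⟩

lemma reducedComulHom_apply (x : A) :
    reducedComulHom R A x = Coalgebra.comul x - x ⊗ₜ[R] (1 : A) - (1 : A) ⊗ₜ[R] x := rfl

lemma reducedComulHom_primitive {x : A} (hx : IsPrimitiveElem R x) :
    reducedComulHom R A x = 0 := by
  rw [reducedComulHom_apply, hx]; abel

lemma mulLeft_span {c : A ⊗[R] A} {n m : ℕ}
    (hc : ∀ s ∈ Sset R A n, c * s ∈ Submodule.span R (Sset R A m))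
    {t : A ⊗[R] A} (ht : t ∈ Submodule.span R (Sset R A n)) :
    c * t ∈ Submodule.span R (Sset R A m) := by
  have := (Submodule.map_span_le (LinearMap.mulLeft R c) (Sset R A n)
    (Submodule.span R (Sset R A m))).2 hc
  exact this ⟨t, ht, rfl⟩

/-- Key lemma: `Δ̄` of a product of primitives lies in the span of split tensors. -/
lemma redComul_list_prod : ∀ (l : List A), l ≠ [] → (∀ x ∈ l, IsPrimitiveElem R x) →
    reducedComulHom R A l.prod ∈ Submodule.span R (Sset R A l.length) := by
  intro l
  induction l with
  | nil => intro h; exact absurd rfl h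
  | cons x l' ih =>
    intro _ hprim
    have hx : IsPrimitiveElem R x := hprim x List.mem_cons_self
    have hl' : ∀ y ∈ l', IsPrimitiveElem R y := fun y hy => hprim y (List.mem_cons_of_mem x hy)
    rcases eq_or_ne l' [] with h | h
    · subst h
      simp only [List.prod_cons, List.prod_nil, mul_one]
      rw [reducedComulHom_primitive hx]
      exact Submodule.zero_mem _
    · -- l' nonempty
      set p := l'.prod with hp
      set D := reducedComulHom R A p with hD
      have hDmem : D ∈ Submodule.span R (Sset R A l'.length) := ih h hl'
      have hcomulp : Coalgebra.comul (R := R) p = D + p ⊗ₜ[R] (1:A) + (1:A) ⊗ₜ[R] p := by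
        rw [hD, reducedComulHom_apply]; abel
      have key : reducedComulHom R A ((x :: l').prod)
          = (x ⊗ₜ[R] (1:A)) * D + ((1:A) ⊗ₜ[R] x) * D + x ⊗ₜ[R] p + p ⊗ₜ[R] x := by
        rw [List.prod_cons, reducedComulHom_apply, Bialgebra.comul_mul, hx, hcomulp]
        simp only [mul_add, add_mul, Algebra.TensorProduct.tmul_mul_tmul, one_mul, mul_one]
        abel
      rw [key]
      have hlen : (x :: l').length = l'.length + 1 := by simp
      have m1 : (x ⊗ₜ[R] (1:A)) * D ∈ Submodule.span R (Sset R A (x :: l').length) := by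
        refine mulLeft_span (fun s hs => ?_) hDmem
        rcases hs with ⟨l₁, l₂, h1, h2, h3, h4, h5, h6⟩
        subst h6
        rw [Algebra.TensorProduct.tmul_mul_tmul, one_mul]
        refine Submodule.subset_span ⟨x :: l₁, l₂, List.cons_ne_nil _ _, h2, ?_, h4, ?_, by
          simp [List.prod_cons]⟩
        · intro y hy
          rcases List.mem_cons.mp hy with rfl | hy
          · exact hx
          · exact h3 y hy
        · simp only [List.length_cons, List.length_nil, hlen]; omega
      have m2 : ((1:A) ⊗ₜ[R] x) * D ∈ Submodule.span R (Sset R A (x :: l').length) := by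
        refine mulLeft_span (fun s hs => ?_) hDmem
        rcases hs with ⟨l₁, l₂, h1, h2, h3, h4, h5, h6⟩
        subst h6
        rw [Algebra.TensorProduct.tmul_mul_tmul, one_mul]
        refine Submodule.subset_span ⟨l₁, x :: l₂, h1, List.cons_ne_nil _ _, h3, ?_, ?_, by
          simp [List.prod_cons]⟩
        · intro y hy
          rcases List.mem_cons.mp hy with rfl | hy
          · exact hx
          · exact h4 y hy
        · simp only [List.length_cons, List.length_nil, hlen]; omega
      have m3 : x ⊗ₜ[R] p ∈ Submodule.span R (Sset R A (x :: l').length) :=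
        Submodule.subset_span ⟨[x], l', List.cons_ne_nil _ _, h,
          by simpa using hx, hl', by simp only [List.length_cons, List.length_nil, hlen]; omega, by simp [hp]⟩
      have m4 : p ⊗ₜ[R] x ∈ Submodule.span R (Sset R A (x :: l').length) :=
        Submodule.subset_span ⟨l', [x], h, List.cons_ne_nil _ _, hl',
          by simpa using hx, by simp only [List.length_cons, List.length_nil, hlen]; omega, by simp [hp]⟩
      exact Submodule.add_mem _ (Submodule.add_mem _ (Submodule.add_mem _ m1 m2) m3) m4

lemma iterRedComul_succ_apply (k : ℕ) (x : A) :
    iterRedComul R A (k+1) x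
      = TensorProduct.map (iterRedComul R A k) LinearMap.id (reducedComulHom R A x) := rfl

/-- Main induction on `k`. -/
lemma key_lemma : ∀ k : ℕ, 1 ≤ k → ∀ l : List A, l ≠ [] → l.length ≤ k →
    (∀ x ∈ l, IsPrimitiveElem R x) → iterRedComul R A k l.prod = 0 := by
  intro k
  induction k with
  | zero => omega
  | succ k ih =>
    intro _ l hne hlen hprim
    rw [iterRedComul_succ_apply]
    have hmem : reducedComulHom R A l.prod ∈ Submodule.span R (Sset R A (k+1)) :=
      Submodule.span_mono (Sset_mono hlen) (redComul_list_prod l hne hprim)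
    -- show the map kills the span
    have hgen : ∀ s ∈ Sset R A (k+1),
        TensorProduct.map (iterRedComul R A k) (LinearMap.id (R := R) (M := A)) s = 0 := by
      rintro s ⟨l₁, l₂, h1, h2, h3, h4, h5, h6⟩
      subst h6
      have hk1 : iterRedComul R A k l₁.prod = 0 := by
        rcases Nat.eq_zero_or_pos k with rfl | hk
        · -- k = 0 : then l₁.length + l₂.length ≤ 1, impossible since both ≥ 1
          have : 1 ≤ l₁.length := List.length_pos_iff.mpr h1
          have : 1 ≤ l₂.length := List.length_pos_iff.mpr h2
          omega
        · refine ih hk l₁ h1 ?_ h3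
          have : 1 ≤ l₂.length := List.length_pos_iff.mpr h2
          omega
      rw [TensorProduct.map_tmul, hk1, TensorProduct.zero_tmul]
    refine Submodule.span_induction hgen (by simp; rfl) ?_ ?_ hmem
    · intro a b _ _ ha hb
      rw [map_add, ha, hb]; exact add_zero _
    · intro r a _ ha
      rw [map_smul, ha]; exact smul_zero _

end Aux


/-- `P^k ⊆ ker(Δ̄^k)`: the `k`-fold iterated reduced comultiplication vanishes
on every product of at most `k` primitive elements. -/
theorem stmt3 {R : Type u} {A : Type v} [CommRing R] [Ring A] [Bialgebra R A]
    (k : ℕ) (hk : 1 ≤ k) (x : A) (hx : x ∈ Pfilt R A k) :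
    iterRedComul R A k x = 0 := by
  have hgen : ∀ z ∈ {z : A | ∃ l : List A, l ≠ [] ∧ l.length ≤ k ∧
      (∀ x ∈ l, IsPrimitiveElem R x) ∧ z = l.prod}, iterRedComul R A k z = 0 := by
    rintro z ⟨l, h1, h2, h3, rfl⟩
    exact key_lemma k hk l h1 h2 h3
  refine Submodule.span_induction hgen (by simp) ?_ ?_ hx
  · intro a b _ _ ha hb; rw [map_add, ha, hb, add_zero]
  · intro r a _ ha; rw [map_smul, ha, smul_zero]
end

section
/- Path sums of an edge labelling that vanishes on squares and hexagons are path-independent: let G = G_1 □ ⋯ □ G_m be a box product of permutographs, let M be an additive commutative group, and let φ assign to each ordered pair (v, w) of adjacent vertices of G an element φ(v,w) ∈ M with φ(w,v) = −φ(v,w). Assume that for every closed walk in G of length 4 and every closed walk in G of length 6, the sum of φ over its consecutive directed edges is zero. Then the sum of φ over the consecutive directed edges of every closed walk in G is zero; consequently, for any two walks in G with the same starting vertex and the same ending vertex, the sums of φ along their edges agree. -/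
/-- The permutograph on words `Fin N → Fin s`: two words are adjacent iff one is obtained
from the other by exchanging two distinct letters sitting in adjacent positions `i, i+1`. -/
def permutograph (N s : ℕ) : SimpleGraph (Fin N → Fin s) where
  Adj v w := ∃ (i : ℕ) (h : i + 1 < N),
      v ⟨i, Nat.lt_of_succ_lt h⟩ ≠ v ⟨i + 1, h⟩ ∧
      w = v ∘ Equiv.swap ⟨i, Nat.lt_of_succ_lt h⟩ ⟨i + 1, h⟩
  symm := by
    constructor
    rintro v w ⟨i, h, hne, rfl⟩
    refine ⟨i, h, ?_, ?_⟩
    · simpa using hne.symm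
    · funext k
      simp
  loopless := by
    constructor
    rintro v ⟨i, h, hne, hv⟩
    apply hne
    conv_lhs => rw [hv]
    simp

/-- The box product of a family of simple graphs: two tuples are adjacent iff they agree in
all coordinates except exactly one, in which they are adjacent. -/
def boxProdFamily {ι : Type*} {V : ι → Type*} (G : ∀ i, SimpleGraph (V i)) :
    SimpleGraph (∀ i, V i) where
  Adj a b := ∃ i, (G i).Adj (a i) (b i) ∧ ∀ j, j ≠ i → a j = b j
  symm := by
    constructor
    rintro a b ⟨i, hadj, hj⟩
    exact ⟨i, hadj.symm, fun j hne => (hj j hne).symm⟩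
  loopless := by
    constructor
    rintro a ⟨i, hadj, -⟩
    exact (G i).loopless.irrefl (a i) hadj


namespace Stmt11

variable {n s : ℕ}

def inv (a : Fin n → Fin s) : ℕ :=
  (Finset.univ.filter (fun p : Fin n × Fin n => p.1 < p.2 ∧ a p.2 < a p.1)).card

def wflip (a : Fin n → Fin s) (i : ℕ) (hi : i + 1 < n) : Fin n → Fin s :=
  a ∘ Equiv.swap ⟨i, Nat.lt_of_succ_lt hi⟩ ⟨i + 1, hi⟩

lemma wflip_wflip (a : Fin n → Fin s) (i : ℕ) (hi : i + 1 < n) :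
    wflip (wflip a i hi) i hi = a := by
  funext k
  simp [wflip]

lemma wflip_apply_fst (a : Fin n → Fin s) (i : ℕ) (hi : i + 1 < n) :
    wflip a i hi ⟨i, Nat.lt_of_succ_lt hi⟩ = a ⟨i + 1, hi⟩ := by
  simp [wflip]

lemma wflip_apply_snd (a : Fin n → Fin s) (i : ℕ) (hi : i + 1 < n) :
    wflip a i hi ⟨i + 1, hi⟩ = a ⟨i, Nat.lt_of_succ_lt hi⟩ := by
  simp [wflip]

lemma wflip_apply_other (a : Fin n → Fin s) (i : ℕ) (hi : i + 1 < n) (k : Fin n)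
    (h1 : (k : ℕ) ≠ i) (h2 : (k : ℕ) ≠ i + 1) :
    wflip a i hi k = a k := by
  have e1 : k ≠ ⟨i, Nat.lt_of_succ_lt hi⟩ := fun h => h1 (by simp [h])
  have e2 : k ≠ ⟨i + 1, hi⟩ := fun h => h2 (by simp [h])
  simp [wflip, Equiv.swap_apply_of_ne_of_ne e1 e2]

lemma swap_lt_swap {i : ℕ} (hi : i + 1 < n) {p q : Fin n} (hpq : p < q)
    (hne : ¬(p = ⟨i, Nat.lt_of_succ_lt hi⟩ ∧ q = ⟨i + 1, hi⟩)) :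
    Equiv.swap ⟨i, Nat.lt_of_succ_lt hi⟩ ⟨i + 1, hi⟩ p
      < Equiv.swap ⟨i, Nat.lt_of_succ_lt hi⟩ ⟨i + 1, hi⟩ q := by
  set i0 : Fin n := ⟨i, Nat.lt_of_succ_lt hi⟩ with hi0
  set i1 : Fin n := ⟨i + 1, hi⟩ with hi1
  have hv : ∀ x y : Fin n, x < y ↔ (x : ℕ) < (y : ℕ) := fun x y => Fin.lt_def
  have hpq' : (p : ℕ) < (q : ℕ) := (hv p q).1 hpq
  rcases eq_or_ne p i0 with rfl | hp0
  · have hq1 : q ≠ i1 := fun h => hne ⟨rfl, h⟩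
    have hq0 : q ≠ i0 := ne_of_gt hpq
    rw [Equiv.swap_apply_left, Equiv.swap_apply_of_ne_of_ne hq0 hq1]
    rw [hv]
    have h2 : (q : ℕ) ≠ i + 1 := fun h => hq1 (Fin.ext h)
    simp only [hi1]
    change i < (q : ℕ) at hpq'
    omega
  rcases eq_or_ne p i1 with rfl | hp1
  · have hq0 : q ≠ i0 := by
      intro h; rw [h] at hpq; have hx := Fin.lt_def.1 hpq; simp [hi0, hi1] at hx
    have hq1 : q ≠ i1 := ne_of_gt hpq
    rw [Equiv.swap_apply_right, Equiv.swap_apply_of_ne_of_ne hq0 hq1]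
    rw [hv]
    change i + 1 < (q : ℕ) at hpq'
    simp only [hi0]
    omega
  rw [Equiv.swap_apply_of_ne_of_ne hp0 hp1]
  rcases eq_or_ne q i0 with rfl | hq0
  · rw [Equiv.swap_apply_left, hv]
    change (p : ℕ) < i at hpq'
    simp only [hi1]
    omega
  rcases eq_or_ne q i1 with rfl | hq1
  · rw [Equiv.swap_apply_right, hv]
    change (p : ℕ) < i + 1 at hpq'
    have h2 : (p : ℕ) ≠ i := fun h => hp0 (Fin.ext h)
    simp only [hi0]
    omega
  rw [Equiv.swap_apply_of_ne_of_ne hq0 hq1]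
  exact hpq

lemma inv_wflip_of_lt {a : Fin n → Fin s} {i : ℕ} (hi : i + 1 < n)
    (h : a ⟨i, Nat.lt_of_succ_lt hi⟩ < a ⟨i + 1, hi⟩) :
    inv (wflip a i hi) = inv a + 1 := by
  classical
  set i0 : Fin n := ⟨i, Nat.lt_of_succ_lt hi⟩ with hi0
  set i1 : Fin n := ⟨i + 1, hi⟩ with hi1
  set σ := Equiv.swap i0 i1 with hσ
  have hσσ : ∀ x, σ (σ x) = x := fun x => Equiv.swap_apply_self _ _ x
  set T := Finset.univ.filter (fun p : Fin n × Fin n => p.1 < p.2 ∧ a p.2 < a p.1) with hT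
  set T' := Finset.univ.filter
      (fun p : Fin n × Fin n => p.1 < p.2 ∧ wflip a i hi p.2 < wflip a i hi p.1) with hT'
  have hwf : ∀ x, wflip a i hi x = a (σ x) := fun x => rfl
  have key : T' = insert (i0, i1) (T.image fun p => (σ p.1, σ p.2)) := by
    ext ⟨p, q⟩
    simp only [hT, hT', Finset.mem_insert, Finset.mem_image, Finset.mem_filter,
      Finset.mem_univ, true_and, Prod.mk.injEq, Prod.exists]
    constructor
    · rintro ⟨hpq, hlt⟩
      by_cases hc : p = i0 ∧ q = i1
      · exact Or.inl hc
      · refine Or.inr ⟨σ p, σ q, ⟨swap_lt_swap hi hpq hc, ?_⟩, by rw [hσσ], by rw [hσσ]⟩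
        rw [hwf, hwf] at hlt; exact hlt
    · rintro (⟨rfl, rfl⟩ | ⟨p', q', ⟨hpq', hlt'⟩, rfl, rfl⟩)
      · refine ⟨by simp [hi0, hi1, Fin.lt_def], ?_⟩
        rw [hwf, hwf, hσ, Equiv.swap_apply_left, Equiv.swap_apply_right]
        exact h
      · have hc : ¬(p' = i0 ∧ q' = i1) := by
          rintro ⟨rfl, rfl⟩
          exact absurd h (not_lt.2 hlt'.le)
        refine ⟨swap_lt_swap hi hpq' hc, ?_⟩
        rw [hwf, hwf, hσσ, hσσ]
        exact hlt'
  have hnotmem : (i0, i1) ∉ T.image fun p => (σ p.1, σ p.2) := by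
    simp only [Finset.mem_image, Prod.mk.injEq, Prod.exists, not_exists, not_and, hT,
      Finset.mem_filter, Finset.mem_univ, true_and]
    rintro p q ⟨hpq, -⟩ hp hq
    have : p = i1 := by
      have := congrArg σ hp; rwa [hσσ, hσ, Equiv.swap_apply_left] at this
    have : q = i0 := by
      have := congrArg σ hq; rwa [hσσ, hσ, Equiv.swap_apply_right] at this
    subst_vars
    exact absurd hpq (by simp [hi0, hi1, Fin.lt_def])
  have hinj : Function.Injective (fun p : Fin n × Fin n => (σ p.1, σ p.2)) := by
    rintro ⟨x1, x2⟩ ⟨y1, y2⟩ hxy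
    simp only [Prod.mk.injEq] at hxy
    exact Prod.ext (σ.injective hxy.1) (σ.injective hxy.2)
  calc inv (wflip a i hi) = T'.card := rfl
    _ = (T.image fun p => (σ p.1, σ p.2)).card + 1 := by
        rw [key, Finset.card_insert_of_notMem hnotmem]
    _ = T.card + 1 := by rw [Finset.card_image_of_injective _ hinj]
    _ = inv a + 1 := rfl

lemma inv_wflip_of_gt {a : Fin n → Fin s} {i : ℕ} (hi : i + 1 < n)
    (h : a ⟨i + 1, hi⟩ < a ⟨i, Nat.lt_of_succ_lt hi⟩) :
    inv a = inv (wflip a i hi) + 1 := by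
  have hb : wflip a i hi ⟨i, Nat.lt_of_succ_lt hi⟩ < wflip a i hi ⟨i + 1, hi⟩ := by
    rw [wflip_apply_fst, wflip_apply_snd]; exact h
  have := inv_wflip_of_lt hi hb
  rwa [wflip_wflip] at this

lemma exists_desc {a : Fin n → Fin s} (h : inv a ≠ 0) :
    ∃ (i : ℕ) (hi : i + 1 < n), a ⟨i + 1, hi⟩ < a ⟨i, Nat.lt_of_succ_lt hi⟩ := by
  by_contra hc
  push_neg at hc
  have mono : ∀ (d j : ℕ) (hd : j + d < n), a ⟨j, by omega⟩ ≤ a ⟨j + d, hd⟩ := by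
    intro d
    induction d with
    | zero => intro j hd; exact le_refl _
    | succ d ih =>
      intro j hd
      have h1 : j + d + 1 < n := by omega
      calc a ⟨j, by omega⟩ ≤ a ⟨j + d, by omega⟩ := ih j (by omega)
        _ ≤ a ⟨j + d + 1, h1⟩ := hc (j + d) h1
        _ = a ⟨j + (d + 1), hd⟩ := by congr 1
  apply h
  rw [inv, Finset.card_eq_zero, Finset.filter_eq_empty_iff]
  rintro ⟨p, q⟩ -
  simp only [not_and, not_lt]
  intro hpq
  have hlt : (p : ℕ) < (q : ℕ) := Fin.lt_def.1 hpq
  have := mono ((q : ℕ) - (p : ℕ)) (p : ℕ) (by omega)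
  convert this using 2
  · rfl
  exact Fin.ext (by show (q : ℕ) = p + (q - p); omega)


lemma wflip_val (a : Fin n → Fin s) (i : ℕ) (hi : i + 1 < n) (k : ℕ) (hk : k < n) :
    wflip a i hi ⟨k, hk⟩ =
      if k = i then a ⟨i + 1, hi⟩
      else if k = i + 1 then a ⟨i, Nat.lt_of_succ_lt hi⟩ else a ⟨k, hk⟩ := by
  split_ifs with h1 h2
  · subst h1; exact wflip_apply_fst a k hi
  · subst h2; exact wflip_apply_snd a i hi
  · exact wflip_apply_other a i hi _ h1 h2

lemma wflip_comm_lt {a : Fin n → Fin s} {i i' : ℕ} (hi : i + 1 < n) (hi' : i' + 1 < n)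
    (hlt : i + 1 < i') :
    wflip (wflip a i hi) i' hi' = wflip (wflip a i' hi') i hi := by
  funext k
  rcases k with ⟨k, hk⟩
  simp only [wflip_val]
  split_ifs <;> first | rfl | omega | exact congrArg a (Fin.ext (by omega))

lemma wflip_comm' {a : Fin n → Fin s} {i i' : ℕ} (hi : i + 1 < n) (hi' : i' + 1 < n)
    (hd : i + 1 < i' ∨ i' + 1 < i) :
    wflip (wflip a i hi) i' hi' = wflip (wflip a i' hi') i hi := by
  rcases hd with h | h
  · exact wflip_comm_lt hi hi' h
  · exact (wflip_comm_lt hi' hi h).symm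

lemma wflip_braid {a : Fin n → Fin s} {i : ℕ} (hi : i + 1 < n) (hi2 : i + 1 + 1 < n) :
    wflip (wflip (wflip a i hi) (i + 1) hi2) i hi
      = wflip (wflip (wflip a (i + 1) hi2) i hi) (i + 1) hi2 := by
  funext k
  rcases k with ⟨k, hk⟩
  simp only [wflip_val]
  split_ifs <;> first | rfl | omega | exact congrArg a (Fin.ext (by omega))

section Box

variable {m : ℕ} {N s : Fin m → ℕ}

abbrev GB (N s : Fin m → ℕ) : SimpleGraph (∀ j, Fin (N j) → Fin (s j)) :=
  boxProdFamily fun j => permutograph (N j) (s j)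

def flip (v : ∀ j, Fin (N j) → Fin (s j)) (j : Fin m) (i : ℕ) (hi : i + 1 < N j) :
    ∀ j, Fin (N j) → Fin (s j) :=
  Function.update v j (wflip (v j) i hi)

lemma flip_apply_same (v : ∀ j, Fin (N j) → Fin (s j)) (j : Fin m) (i : ℕ) (hi : i + 1 < N j) :
    flip v j i hi j = wflip (v j) i hi :=
  Function.update_self j _ v

lemma flip_apply_other (v : ∀ j, Fin (N j) → Fin (s j)) (j : Fin m) (i : ℕ) (hi : i + 1 < N j)
    (k : Fin m) (hk : k ≠ j) : flip v j i hi k = v k :=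
  Function.update_of_ne hk _ v

lemma flip_flip (v : ∀ j, Fin (N j) → Fin (s j)) (j : Fin m) (i : ℕ) (hi : i + 1 < N j) :
    flip (flip v j i hi) j i hi = v := by
  funext k
  by_cases hk : k = j
  · subst hk
    rw [flip_apply_same, flip_apply_same, wflip_wflip]
  · rw [flip_apply_other _ _ _ _ _ hk, flip_apply_other _ _ _ _ _ hk]

lemma adj_iff {v w : ∀ j, Fin (N j) → Fin (s j)} :
    (GB N s).Adj v w ↔ ∃ (j : Fin m) (i : ℕ) (hi : i + 1 < N j),
      v j ⟨i, Nat.lt_of_succ_lt hi⟩ ≠ v j ⟨i + 1, hi⟩ ∧ w = flip v j i hi := by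
  constructor
  · rintro ⟨j, ⟨i, hi, hne, hw⟩, hoth⟩
    refine ⟨j, i, hi, hne, ?_⟩
    funext k
    by_cases hk : k = j
    · subst hk
      rw [flip_apply_same, hw]; rfl
    · rw [flip_apply_other _ _ _ _ _ hk]
      exact (hoth k hk).symm
  · rintro ⟨j, i, hi, hne, rfl⟩
    refine ⟨j, ⟨i, hi, hne, ?_⟩, fun k hk => (flip_apply_other _ _ _ _ _ hk).symm⟩
    rw [flip_apply_same]; rfl

lemma adj_flip {v : ∀ j, Fin (N j) → Fin (s j)} {j : Fin m} {i : ℕ} {hi : i + 1 < N j}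
    (hne : v j ⟨i, Nat.lt_of_succ_lt hi⟩ ≠ v j ⟨i + 1, hi⟩) :
    (GB N s).Adj v (flip v j i hi) :=
  adj_iff.2 ⟨j, i, hi, hne, rfl⟩

def Hf (v : ∀ j, Fin (N j) → Fin (s j)) : ℕ := ∑ j, inv (v j)

lemma Hf_update (v : ∀ j, Fin (N j) → Fin (s j)) (j : Fin m) (b : Fin (N j) → Fin (s j)) :
    Hf (Function.update v j b) + inv (v j) = Hf v + inv b := by
  classical
  have h1 : ∀ k, inv (Function.update v j b k)
      = Function.update (fun k => inv (v k)) j (inv b) k := by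
    intro k
    by_cases hk : k = j
    · subst hk; rw [Function.update_self, Function.update_self]
    · rw [Function.update_of_ne hk, Function.update_of_ne hk]
  have h2 : Hf (Function.update v j b)
      = ∑ k, Function.update (fun k => inv (v k)) j (inv b) k :=
    Finset.sum_congr rfl fun k _ => h1 k
  have h3 : Hf v = ∑ k ∈ Finset.univ.erase j, inv (v k) + inv (v j) :=
    (Finset.sum_erase_add _ _ (Finset.mem_univ j)).symm
  rw [h2, Finset.sum_update_of_mem (Finset.mem_univ j), h3,
    Finset.sdiff_singleton_eq_erase]
  abel

lemma Hf_flip_of_desc {v : ∀ j, Fin (N j) → Fin (s j)} {j : Fin m} {i : ℕ} {hi : i + 1 < N j}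
    (h : v j ⟨i + 1, hi⟩ < v j ⟨i, Nat.lt_of_succ_lt hi⟩) :
    Hf (flip v j i hi) + 1 = Hf v := by
  have := Hf_update v j (wflip (v j) i hi)
  have h2 := inv_wflip_of_gt hi h
  rw [flip]; omega

lemma Hf_flip_of_asc {v : ∀ j, Fin (N j) → Fin (s j)} {j : Fin m} {i : ℕ} {hi : i + 1 < N j}
    (h : v j ⟨i, Nat.lt_of_succ_lt hi⟩ < v j ⟨i + 1, hi⟩) :
    Hf (flip v j i hi) = Hf v + 1 := by
  have := Hf_update v j (wflip (v j) i hi)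
  have h2 := inv_wflip_of_lt hi h
  rw [flip]; omega

/-- `DS w v`: `v` is one step below `w`. -/
def DS (w v : ∀ j, Fin (N j) → Fin (s j)) : Prop :=
  (GB N s).Adj v w ∧ Hf v + 1 = Hf w

lemma ds_flip {v : ∀ j, Fin (N j) → Fin (s j)} {j : Fin m} {i : ℕ} {hi : i + 1 < N j}
    (h : v j ⟨i + 1, hi⟩ < v j ⟨i, Nat.lt_of_succ_lt hi⟩) :
    DS v (flip v j i hi) :=
  ⟨(adj_flip (ne_of_gt h)).symm, Hf_flip_of_desc h⟩

lemma ds_iff {w v : ∀ j, Fin (N j) → Fin (s j)} :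
    DS w v ↔ ∃ (j : Fin m) (i : ℕ) (hi : i + 1 < N j),
      w j ⟨i + 1, hi⟩ < w j ⟨i, Nat.lt_of_succ_lt hi⟩ ∧ v = flip w j i hi := by
  constructor
  · rintro ⟨hadj, hH⟩
    obtain ⟨j, i, hi, hne, rfl⟩ := adj_iff.1 hadj
    refine ⟨j, i, hi, ?_, (flip_flip v j i hi).symm⟩
    rcases lt_or_gt_of_ne hne with hlt | hgt
    · rw [flip_apply_same, wflip_apply_fst, wflip_apply_snd]
      exact hlt
    · have := Hf_flip_of_desc hgt
      omega
  · rintro ⟨j, i, hi, hdesc, rfl⟩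
    exact ds_flip hdesc

lemma adj_plusminus {v w : ∀ j, Fin (N j) → Fin (s j)} (h : (GB N s).Adj v w) :
    Hf v + 1 = Hf w ∨ Hf w + 1 = Hf v := by
  obtain ⟨j, i, hi, hne, rfl⟩ := adj_iff.1 h
  rcases lt_or_gt_of_ne hne with hlt | hgt
  · left; exact (Hf_flip_of_asc hlt).symm
  · right; exact Hf_flip_of_desc hgt

lemma exists_ds (w : ∀ j, Fin (N j) → Fin (s j)) (h : Hf w ≠ 0) : ∃ v, DS w v := by
  have : ∃ j, inv (w j) ≠ 0 := by
    by_contra hc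
    push_neg at hc
    exact h (by rw [Hf]; exact Finset.sum_eq_zero fun j _ => hc j)
  obtain ⟨j, hj⟩ := this
  obtain ⟨i, hi, hdesc⟩ := exists_desc hj
  exact ⟨flip w j i hi, ds_flip hdesc⟩

variable {M : Type*} [AddCommGroup M]

noncomputable def F (φ : (GB N s).Dart → M) (w : ∀ j, Fin (N j) → Fin (s j)) : M :=
  if h : Hf w = 0 then 0
  else
    F φ (exists_ds w h).choose
      + φ ⟨((exists_ds w h).choose, w), (exists_ds w h).choose_spec.1⟩
termination_by Hf w
decreasing_by
  have := (exists_ds w h).choose_spec.2; omega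

lemma F_spec (φ : (GB N s).Dart → M) (w : ∀ j, Fin (N j) → Fin (s j)) (h : Hf w ≠ 0) :
    F φ w = F φ (exists_ds w h).choose
      + φ ⟨((exists_ds w h).choose, w), (exists_ds w h).choose_spec.1⟩ := by
  conv_lhs => rw [F]
  rw [dif_neg h]

variable {φ : (GB N s).Dart → M}

lemma flip_update (v : ∀ j, Fin (N j) → Fin (s j)) (j : Fin m) (b : Fin (N j) → Fin (s j))
    (i : ℕ) (hi : i + 1 < N j) :
    flip (Function.update v j b) j i hi = Function.update v j (wflip b i hi) := by
  rw [flip, Function.update_self, Function.update_idem]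

lemma cyc4 (hc4 : ∀ u (wk : (GB N s).Walk u u), wk.length = 4 → (wk.darts.map φ).sum = 0)
    {a b c d : ∀ j, Fin (N j) → Fin (s j)}
    (h1 : (GB N s).Adj a b) (h2 : (GB N s).Adj b c) (h3 : (GB N s).Adj c d)
    (h4 : (GB N s).Adj d a) :
    φ ⟨(a,b),h1⟩ + (φ ⟨(b,c),h2⟩ + (φ ⟨(c,d),h3⟩ + φ ⟨(d,a),h4⟩)) = 0 := by
  have := hc4 a (.cons h1 (.cons h2 (.cons h3 (.cons h4 .nil)))) rfl
  simp only [SimpleGraph.Walk.darts_cons, SimpleGraph.Walk.darts_nil, List.map_cons,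
    List.map_nil, List.sum_cons, List.sum_nil, add_zero] at this
  exact this

lemma cyc6 (hc6 : ∀ u (wk : (GB N s).Walk u u), wk.length = 6 → (wk.darts.map φ).sum = 0)
    {a b c d e f : ∀ j, Fin (N j) → Fin (s j)}
    (h1 : (GB N s).Adj a b) (h2 : (GB N s).Adj b c) (h3 : (GB N s).Adj c d)
    (h4 : (GB N s).Adj d e) (h5 : (GB N s).Adj e f) (h6 : (GB N s).Adj f a) :
    φ ⟨(a,b),h1⟩ + (φ ⟨(b,c),h2⟩ + (φ ⟨(c,d),h3⟩
      + (φ ⟨(d,e),h4⟩ + (φ ⟨(e,f),h5⟩ + φ ⟨(f,a),h6⟩)))) = 0 := by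
  have := hc6 a (.cons h1 (.cons h2 (.cons h3 (.cons h4 (.cons h5 (.cons h6 .nil)))))) rfl
  simp only [SimpleGraph.Walk.darts_cons, SimpleGraph.Walk.darts_nil, List.map_cons,
    List.map_nil, List.sum_cons, List.sum_nil, add_zero] at this
  exact this

lemma phi_rev (hanti : ∀ d, φ d.symm = -φ d) {a b : ∀ j, Fin (N j) → Fin (s j)}
    (h : (GB N s).Adj a b) : φ ⟨(b,a), h.symm⟩ = -φ ⟨(a,b), h⟩ :=
  hanti ⟨(a,b), h⟩

lemma sq_core (hanti : ∀ d, φ d.symm = -φ d)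
    (hc4 : ∀ u (wk : (GB N s).Walk u u), wk.length = 4 → (wk.darts.map φ).sum = 0)
    {w v v' x : ∀ j, Fin (N j) → Fin (s j)}
    (IH : ∀ w' v'' (hadj' : (GB N s).Adj v'' w'), Hf v'' + 1 = Hf w' → Hf w' < Hf w →
      F φ w' = F φ v'' + φ ⟨(v'', w'), hadj'⟩)
    (dsv : DS w v) (dsv' : DS w v') (dsx : DS v x) (dsx' : DS v' x)
    (hadj1 : (GB N s).Adj v w) (hadj2 : (GB N s).Adj v' w) :
    F φ v + φ ⟨(v, w), hadj1⟩ = F φ v' + φ ⟨(v', w), hadj2⟩ := by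
  have hv := dsv.2
  have hv' := dsv'.2
  have hx := dsx.2
  have e1 : F φ v = F φ x + φ ⟨(x, v), dsx.1⟩ := IH v x dsx.1 dsx.2 (by omega)
  have e2 : F φ v' = F φ x + φ ⟨(x, v'), dsx'.1⟩ := IH v' x dsx'.1 dsx'.2 (by omega)
  have c := cyc4 hc4 dsx.1 hadj1 hadj2.symm dsx'.1.symm
  have r1 : φ ⟨(w, v'), hadj2.symm⟩ = -φ ⟨(v', w), hadj2⟩ := phi_rev hanti hadj2
  have r2 : φ ⟨(v', x), dsx'.1.symm⟩ = -φ ⟨(x, v'), dsx'.1⟩ := phi_rev hanti dsx'.1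
  rw [r1, r2] at c
  have key : φ ⟨(x, v), dsx.1⟩ + φ ⟨(v, w), hadj1⟩
      = φ ⟨(x, v'), dsx'.1⟩ + φ ⟨(v', w), hadj2⟩ := by
    have c2 : (φ ⟨(x, v), dsx.1⟩ + φ ⟨(v, w), hadj1⟩)
        - (φ ⟨(x, v'), dsx'.1⟩ + φ ⟨(v', w), hadj2⟩) = 0 := by
      calc (φ ⟨(x, v), dsx.1⟩ + φ ⟨(v, w), hadj1⟩)
          - (φ ⟨(x, v'), dsx'.1⟩ + φ ⟨(v', w), hadj2⟩)
          = φ ⟨(x, v), dsx.1⟩ + (φ ⟨(v, w), hadj1⟩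
              + (-φ ⟨(v', w), hadj2⟩ + -φ ⟨(x, v'), dsx'.1⟩)) := by abel
        _ = 0 := c
    exact sub_eq_zero.1 c2
  calc F φ v + φ ⟨(v, w), hadj1⟩
      = F φ x + (φ ⟨(x, v), dsx.1⟩ + φ ⟨(v, w), hadj1⟩) := by rw [e1]; abel
    _ = F φ x + (φ ⟨(x, v'), dsx'.1⟩ + φ ⟨(v', w), hadj2⟩) := by rw [key]
    _ = F φ v' + φ ⟨(v', w), hadj2⟩ := by rw [e2]; abel

lemma hex_core (hanti : ∀ d, φ d.symm = -φ d)
    (hc6 : ∀ u (wk : (GB N s).Walk u u), wk.length = 6 → (wk.darts.map φ).sum = 0)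
    {w v v' p q z : ∀ j, Fin (N j) → Fin (s j)}
    (IH : ∀ w' v'' (hadj' : (GB N s).Adj v'' w'), Hf v'' + 1 = Hf w' → Hf w' < Hf w →
      F φ w' = F φ v'' + φ ⟨(v'', w'), hadj'⟩)
    (dsv : DS w v) (dsv' : DS w v') (dsp : DS v p) (dspz : DS p z)
    (dsq : DS v' q) (dsqz : DS q z)
    (hadj1 : (GB N s).Adj v w) (hadj2 : (GB N s).Adj v' w) :
    F φ v + φ ⟨(v, w), hadj1⟩ = F φ v' + φ ⟨(v', w), hadj2⟩ := by
  have hv := dsv.2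
  have hv' := dsv'.2
  have hp := dsp.2
  have hz := dspz.2
  have hq := dsq.2
  have e1 : F φ v = F φ p + φ ⟨(p, v), dsp.1⟩ := IH v p dsp.1 dsp.2 (by omega)
  have e2 : F φ p = F φ z + φ ⟨(z, p), dspz.1⟩ := IH p z dspz.1 dspz.2 (by omega)
  have e3 : F φ v' = F φ q + φ ⟨(q, v'), dsq.1⟩ := IH v' q dsq.1 dsq.2 (by omega)
  have e4 : F φ q = F φ z + φ ⟨(z, q), dsqz.1⟩ := IH q z dsqz.1 dsqz.2 (by omega)
  have c := cyc6 hc6 dspz.1 dsp.1 hadj1 hadj2.symm dsq.1.symm dsqz.1.symm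
  have r1 : φ ⟨(w, v'), hadj2.symm⟩ = -φ ⟨(v', w), hadj2⟩ := phi_rev hanti hadj2
  have r2 : φ ⟨(v', q), dsq.1.symm⟩ = -φ ⟨(q, v'), dsq.1⟩ := phi_rev hanti dsq.1
  have r3 : φ ⟨(q, z), dsqz.1.symm⟩ = -φ ⟨(z, q), dsqz.1⟩ := phi_rev hanti dsqz.1
  rw [r1, r2, r3] at c
  have key : φ ⟨(z, p), dspz.1⟩ + φ ⟨(p, v), dsp.1⟩ + φ ⟨(v, w), hadj1⟩
      = φ ⟨(z, q), dsqz.1⟩ + φ ⟨(q, v'), dsq.1⟩ + φ ⟨(v', w), hadj2⟩ := by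
    have c2 : (φ ⟨(z, p), dspz.1⟩ + φ ⟨(p, v), dsp.1⟩ + φ ⟨(v, w), hadj1⟩)
        - (φ ⟨(z, q), dsqz.1⟩ + φ ⟨(q, v'), dsq.1⟩ + φ ⟨(v', w), hadj2⟩) = 0 := by
      calc (φ ⟨(z, p), dspz.1⟩ + φ ⟨(p, v), dsp.1⟩ + φ ⟨(v, w), hadj1⟩)
          - (φ ⟨(z, q), dsqz.1⟩ + φ ⟨(q, v'), dsq.1⟩ + φ ⟨(v', w), hadj2⟩)
          = φ ⟨(z, p), dspz.1⟩ + (φ ⟨(p, v), dsp.1⟩ + (φ ⟨(v, w), hadj1⟩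
              + (-φ ⟨(v', w), hadj2⟩ + (-φ ⟨(q, v'), dsq.1⟩ + -φ ⟨(z, q), dsqz.1⟩)))) := by
            abel
        _ = 0 := c
    exact sub_eq_zero.1 c2
  calc F φ v + φ ⟨(v, w), hadj1⟩
      = F φ z + (φ ⟨(z, p), dspz.1⟩ + φ ⟨(p, v), dsp.1⟩ + φ ⟨(v, w), hadj1⟩) := by
        rw [e1, e2]; abel
    _ = F φ z + (φ ⟨(z, q), dsqz.1⟩ + φ ⟨(q, v'), dsq.1⟩ + φ ⟨(v', w), hadj2⟩) := by rw [key]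
    _ = F φ v' + φ ⟨(v', w), hadj2⟩ := by rw [e3, e4]; abel

lemma sq_diff_perm (hanti : ∀ d, φ d.symm = -φ d)
    (hc4 : ∀ u (wk : (GB N s).Walk u u), wk.length = 4 → (wk.darts.map φ).sum = 0)
    {w : ∀ j, Fin (N j) → Fin (s j)}
    (IH : ∀ w' v'' (hadj' : (GB N s).Adj v'' w'), Hf v'' + 1 = Hf w' → Hf w' < Hf w →
      F φ w' = F φ v'' + φ ⟨(v'', w'), hadj'⟩)
    {j j' : Fin m} (hjj : j ≠ j') {i i' : ℕ} (hi : i + 1 < N j) (hi' : i' + 1 < N j')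
    (d1 : w j ⟨i + 1, hi⟩ < w j ⟨i, Nat.lt_of_succ_lt hi⟩)
    (d2 : w j' ⟨i' + 1, hi'⟩ < w j' ⟨i', Nat.lt_of_succ_lt hi'⟩)
    (hadj1 : (GB N s).Adj (flip w j i hi) w) (hadj2 : (GB N s).Adj (flip w j' i' hi') w) :
    F φ (flip w j i hi) + φ ⟨(flip w j i hi, w), hadj1⟩
      = F φ (flip w j' i' hi') + φ ⟨(flip w j' i' hi', w), hadj2⟩ := by
  have hvj' : flip w j i hi j' = w j' := flip_apply_other w j i hi j' hjj.symm
  have hv'j : flip w j' i' hi' j = w j := flip_apply_other w j' i' hi' j hjj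
  have d2v : flip w j i hi j' ⟨i' + 1, hi'⟩
      < flip w j i hi j' ⟨i', Nat.lt_of_succ_lt hi'⟩ := by rw [hvj']; exact d2
  have d1v' : flip w j' i' hi' j ⟨i + 1, hi⟩
      < flip w j' i' hi' j ⟨i, Nat.lt_of_succ_lt hi⟩ := by rw [hv'j]; exact d1
  have hx : flip (flip w j' i' hi') j i hi = flip (flip w j i hi) j' i' hi' := by
    show Function.update (flip w j' i' hi') j (wflip (flip w j' i' hi' j) i hi)
      = Function.update (flip w j i hi) j' (wflip (flip w j i hi j') i' hi')
    rw [hv'j, hvj']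
    show Function.update (Function.update w j' (wflip (w j') i' hi')) j (wflip (w j) i hi) = _
    rw [Function.update_comm hjj.symm]
    rfl
  have dsx : DS (flip w j i hi) (flip (flip w j i hi) j' i' hi') := ds_flip d2v
  have dsx' : DS (flip w j' i' hi') (flip (flip w j i hi) j' i' hi') := by
    have h' := ds_flip d1v'
    rwa [hx] at h'
  exact sq_core hanti hc4 IH (ds_flip d1) (ds_flip d2) dsx dsx' hadj1 hadj2

lemma sq_same_perm (hanti : ∀ d, φ d.symm = -φ d)
    (hc4 : ∀ u (wk : (GB N s).Walk u u), wk.length = 4 → (wk.darts.map φ).sum = 0)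
    {w : ∀ j, Fin (N j) → Fin (s j)}
    (IH : ∀ w' v'' (hadj' : (GB N s).Adj v'' w'), Hf v'' + 1 = Hf w' → Hf w' < Hf w →
      F φ w' = F φ v'' + φ ⟨(v'', w'), hadj'⟩)
    {j : Fin m} {i i' : ℕ} (hi : i + 1 < N j) (hi' : i' + 1 < N j)
    (hd : i + 1 < i' ∨ i' + 1 < i)
    (d1 : w j ⟨i + 1, hi⟩ < w j ⟨i, Nat.lt_of_succ_lt hi⟩)
    (d2 : w j ⟨i' + 1, hi'⟩ < w j ⟨i', Nat.lt_of_succ_lt hi'⟩)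
    (hadj1 : (GB N s).Adj (flip w j i hi) w) (hadj2 : (GB N s).Adj (flip w j i' hi') w) :
    F φ (flip w j i hi) + φ ⟨(flip w j i hi, w), hadj1⟩
      = F φ (flip w j i' hi') + φ ⟨(flip w j i' hi', w), hadj2⟩ := by
  have hvj : flip w j i hi j = wflip (w j) i hi := flip_apply_same w j i hi
  have hv'j : flip w j i' hi' j = wflip (w j) i' hi' := flip_apply_same w j i' hi'
  have d2v : flip w j i hi j ⟨i' + 1, hi'⟩
      < flip w j i hi j ⟨i', Nat.lt_of_succ_lt hi'⟩ := by
    simp only [hvj, wflip_val]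
    split_ifs <;> first | omega | exact d2
  have d1v' : flip w j i' hi' j ⟨i + 1, hi⟩
      < flip w j i' hi' j ⟨i, Nat.lt_of_succ_lt hi⟩ := by
    simp only [hv'j, wflip_val]
    split_ifs <;> first | omega | exact d1
  have hx : flip (flip w j i' hi') j i hi = flip (flip w j i hi) j i' hi' := by
    show flip (Function.update w j (wflip (w j) i' hi')) j i hi
      = flip (Function.update w j (wflip (w j) i hi)) j i' hi'
    rw [flip_update, flip_update, wflip_comm' hi hi' hd]
  have dsx : DS (flip w j i hi) (flip (flip w j i hi) j i' hi') := ds_flip d2v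
  have dsx' : DS (flip w j i' hi') (flip (flip w j i hi) j i' hi') := by
    have h' := ds_flip d1v'
    rwa [hx] at h'
  exact sq_core hanti hc4 IH (ds_flip d1) (ds_flip d2) dsx dsx' hadj1 hadj2

lemma hex_perm (hanti : ∀ d, φ d.symm = -φ d)
    (hc6 : ∀ u (wk : (GB N s).Walk u u), wk.length = 6 → (wk.darts.map φ).sum = 0)
    {w : ∀ j, Fin (N j) → Fin (s j)}
    (IH : ∀ w' v'' (hadj' : (GB N s).Adj v'' w'), Hf v'' + 1 = Hf w' → Hf w' < Hf w →
      F φ w' = F φ v'' + φ ⟨(v'', w'), hadj'⟩)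
    {j : Fin m} {i : ℕ} (hi : i + 1 < N j) (hi2 : i + 1 + 1 < N j)
    (d1 : w j ⟨i + 1, hi⟩ < w j ⟨i, Nat.lt_of_succ_lt hi⟩)
    (d2 : w j ⟨i + 1 + 1, hi2⟩ < w j ⟨i + 1, Nat.lt_of_succ_lt hi2⟩)
    (hadj1 : (GB N s).Adj (flip w j i hi) w)
    (hadj2 : (GB N s).Adj (flip w j (i + 1) hi2) w) :
    F φ (flip w j i hi) + φ ⟨(flip w j i hi, w), hadj1⟩
      = F φ (flip w j (i + 1) hi2) + φ ⟨(flip w j (i + 1) hi2, w), hadj2⟩ := by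
  have hvj : flip w j i hi j = wflip (w j) i hi := flip_apply_same w j i hi
  have hv'j : flip w j (i + 1) hi2 j = wflip (w j) (i + 1) hi2 :=
    flip_apply_same w j (i + 1) hi2
  have dac : w j ⟨i + 1 + 1, hi2⟩ < w j ⟨i, Nat.lt_of_succ_lt hi⟩ := lt_trans d2 d1
  have dv : flip w j i hi j ⟨i + 1 + 1, hi2⟩
      < flip w j i hi j ⟨i + 1, Nat.lt_of_succ_lt hi2⟩ := by
    simp only [hvj, wflip_val]
    split_ifs <;> first | omega | exact dac
  have hpj : flip (flip w j i hi) j (i + 1) hi2 j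
      = wflip (wflip (w j) i hi) (i + 1) hi2 := by
    rw [flip_apply_same, hvj]
  have dp : flip (flip w j i hi) j (i + 1) hi2 j ⟨i + 1, Nat.lt_of_succ_lt hi2⟩
      < flip (flip w j i hi) j (i + 1) hi2 j ⟨i, Nat.lt_of_succ_lt hi⟩ := by
    simp only [hpj, wflip_val]
    split_ifs <;> first | omega | exact d2
  have dv' : flip w j (i + 1) hi2 j ⟨i + 1, hi⟩
      < flip w j (i + 1) hi2 j ⟨i, Nat.lt_of_succ_lt hi⟩ := by
    simp only [hv'j, wflip_val]
    split_ifs <;> first | omega | exact dac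
  have hqj : flip (flip w j (i + 1) hi2) j i hi j
      = wflip (wflip (w j) (i + 1) hi2) i hi := by
    rw [flip_apply_same, hv'j]
  have dq : flip (flip w j (i + 1) hi2) j i hi j ⟨i + 1 + 1, hi2⟩
      < flip (flip w j (i + 1) hi2) j i hi j ⟨i + 1, Nat.lt_of_succ_lt hi2⟩ := by
    simp only [hqj, wflip_val]
    split_ifs <;> first | omega | exact d1
  have hz : flip (flip (flip w j (i + 1) hi2) j i hi) j (i + 1) hi2
      = flip (flip (flip w j i hi) j (i + 1) hi2) j i hi := by
    show flip (flip (Function.update w j (wflip (w j) (i + 1) hi2)) j i hi) j (i + 1) hi2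
      = flip (flip (Function.update w j (wflip (w j) i hi)) j (i + 1) hi2) j i hi
    rw [flip_update, flip_update, flip_update, flip_update, wflip_braid hi hi2]
  have dspz : DS (flip (flip w j i hi) j (i + 1) hi2)
      (flip (flip (flip w j i hi) j (i + 1) hi2) j i hi) := ds_flip dp
  have dsqz : DS (flip (flip w j (i + 1) hi2) j i hi)
      (flip (flip (flip w j i hi) j (i + 1) hi2) j i hi) := by
    have h' := ds_flip dq
    rwa [hz] at h'
  exact hex_core hanti hc6 IH (ds_flip d1) (ds_flip d2) (ds_flip dv) dspz (ds_flip dv')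
    dsqz hadj1 hadj2

lemma F_down (hanti : ∀ d, φ d.symm = -φ d)
    (hc4 : ∀ u (wk : (GB N s).Walk u u), wk.length = 4 → (wk.darts.map φ).sum = 0)
    (hc6 : ∀ u (wk : (GB N s).Walk u u), wk.length = 6 → (wk.darts.map φ).sum = 0) :
    ∀ (n : ℕ) (w v : ∀ j, Fin (N j) → Fin (s j)) (hadj : (GB N s).Adj v w),
      Hf v + 1 = Hf w → Hf w = n → F φ w = F φ v + φ ⟨(v, w), hadj⟩ := by
  intro n
  induction n using Nat.strong_induction_on with
  | _ n IH =>
    intro w v hadj hH hn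
    subst hn
    have h0 : Hf w ≠ 0 := by omega
    have IH' : ∀ w' v'' (hadj' : (GB N s).Adj v'' w'), Hf v'' + 1 = Hf w' → Hf w' < Hf w →
        F φ w' = F φ v'' + φ ⟨(v'', w'), hadj'⟩ := by
      intro w' v'' ha hh hlt
      exact IH (Hf w') hlt w' v'' ha hh rfl
    suffices hS : ∀ (v₀ : ∀ j, Fin (N j) → Fin (s j)) (hds : DS w v₀),
        F φ w = F φ v₀ + φ ⟨(v₀, w), hds.1⟩ → F φ w = F φ v + φ ⟨(v, w), hadj⟩ by
      exact hS (exists_ds w h0).choose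
        ⟨(exists_ds w h0).choose_spec.1, (exists_ds w h0).choose_spec.2⟩ (F_spec φ w h0)
    intro v₀ hds hFw
    by_cases hveq : v₀ = v
    · subst hveq; exact hFw
    · obtain ⟨j, i, hi, di, hv⟩ := ds_iff.1 (⟨hadj, hH⟩ : DS w v)
      obtain ⟨j', i', hi', di', hv₀⟩ := ds_iff.1 hds
      subst hv
      subst hv₀
      rw [hFw]
      by_cases hjj : j' = j
      · subst hjj
        have hii : ¬(i' = i) := by
          intro he; subst he; exact hveq rfl
        rcases (show i + 1 = i' ∨ i' + 1 = i ∨ (i' + 1 < i ∨ i + 1 < i') by omega)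
          with he | he | hdsep
        · subst he
          exact (hex_perm hanti hc6 IH' hi hi' di di' hadj hds.1).symm
        · subst he
          exact hex_perm hanti hc6 IH' hi' hi di' di hds.1 hadj
        · exact sq_same_perm hanti hc4 IH' hi' hi hdsep di' di hds.1 hadj
      · exact sq_diff_perm hanti hc4 IH' hjj hi' hi di' di hds.1 hadj

lemma walk_sum (hanti : ∀ d, φ d.symm = -φ d)
    (hc4 : ∀ u (wk : (GB N s).Walk u u), wk.length = 4 → (wk.darts.map φ).sum = 0)
    (hc6 : ∀ u (wk : (GB N s).Walk u u), wk.length = 6 → (wk.darts.map φ).sum = 0)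
    {u v : ∀ j, Fin (N j) → Fin (s j)} (p : (GB N s).Walk u v) :
    (p.darts.map φ).sum = F φ v - F φ u := by
  induction p with
  | nil => simp
  | @cons a b c h p ih =>
    simp only [SimpleGraph.Walk.darts_cons, List.map_cons, List.sum_cons, ih]
    have step : φ ⟨(a, b), h⟩ = F φ b - F φ a := by
      rcases adj_plusminus h with hh | hh
      · rw [F_down hanti hc4 hc6 (Hf b) b a h hh rfl]; abel
      · have e := F_down hanti hc4 hc6 (Hf a) a b h.symm hh rfl
        have r : φ ⟨(b, a), h.symm⟩ = -φ ⟨(a, b), h⟩ := phi_rev hanti h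
        rw [r] at e
        rw [e]; abel
    rw [step]; abel

end Box

end Stmt11

/-- Path sums of an antisymmetric edge labelling of a box product of
permutographs that vanishes on closed walks of length `4` and `6` are path-independent:
the sum of the labels along every closed walk vanishes, and consequently any two walks with
the same endpoints have the same label sum. -/
theorem stmt11 (m : ℕ) (N s : Fin m → ℕ) (hN : ∀ j, 1 ≤ N j) (hs : ∀ j, 1 ≤ s j)
    {M : Type*} [AddCommGroup M]
    (φ : (boxProdFamily fun j => permutograph (N j) (s j)).Dart → M)
    (hanti : ∀ d, φ d.symm = -φ d)
    (h4 : ∀ (u : ∀ j : Fin m, Fin (N j) → Fin (s j))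
      (w : (boxProdFamily fun j => permutograph (N j) (s j)).Walk u u),
      w.length = 4 → (w.darts.map φ).sum = 0)
    (h6 : ∀ (u : ∀ j : Fin m, Fin (N j) → Fin (s j))
      (w : (boxProdFamily fun j => permutograph (N j) (s j)).Walk u u),
      w.length = 6 → (w.darts.map φ).sum = 0) :
    (∀ (u : ∀ j : Fin m, Fin (N j) → Fin (s j))
      (w : (boxProdFamily fun j => permutograph (N j) (s j)).Walk u u),
      (w.darts.map φ).sum = 0) ∧
    (∀ (u v : ∀ j : Fin m, Fin (N j) → Fin (s j))
      (w₁ w₂ : (boxProdFamily fun j => permutograph (N j) (s j)).Walk u v),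
      (w₁.darts.map φ).sum = (w₂.darts.map φ).sum) := by
  constructor
  · intro u w
    rw [Stmt11.walk_sum hanti h4 h6 w]
    simp
  · intro u v w₁ w₂
    rw [Stmt11.walk_sum hanti h4 h6 w₁, Stmt11.walk_sum hanti h4 h6 w₂]
end
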